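/- Let n ≥ 2 and let α, α' be as in the rank-one decomposition of the weighted graph Laplacian (α'_{ij} = α_{ij} + α_{in}α_{jn}/∑_k α_{kn} for i,j < n, α'_{in} = 0, assuming ∑_{i<n} α_{in} > 0). Then the eigenvalues interlace: if μ_1(α) ≤ … ≤ μ_n(α) and μ_1(α') ≤ … ≤ μ_n(α') are the eigenvalues of L(α) and L(α'), then μ_k(α') ≤ μ_k(α) ≤ μ_{k+1}(α') for all 1 ≤ k ≤ n-1. -/

import Mathlib

open Matrix BigOperators

noncomputable def wvec {n : ℕ} (i j : Fin n) : Fin n → ℝ :=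
  Pi.single i 1 - Pi.single j 1

noncomputable def Lap {n : ℕ} (α : Fin n → Fin n → ℝ) : Matrix (Fin n) (Fin n) ℝ :=
  ∑ i, ∑ j, if i < j then α i j • Matrix.vecMulVec (wvec i j) (wvec i j) else 0

/-- The eigenvalues of a Hermitian matrix, listed in nondecreasing order. -/
noncomputable def sortedEigs {n : ℕ} (A : Matrix (Fin n) (Fin n) ℝ)
    (hA : A.IsHermitian) : Fin n → ℝ :=
  hA.eigenvalues ∘ Tuple.sort hA.eigenvalues


section Aux
open Finset

variable {m : ℕ} {A : Matrix (Fin m) (Fin m) ℝ} (hA : A.IsHermitian)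

local notation "E" => EuclideanSpace ℝ (Fin m)

lemma quad_eq_sum (x : E) :
    (inner ℝ x (Matrix.toEuclideanLin A x) : ℝ)
      = ∑ i, hA.eigenvalues i * (inner ℝ (hA.eigenvectorBasis i) x : ℝ)^2 := by
  have hsym : (Matrix.toEuclideanLin A).IsSymmetric :=
    (Matrix.isHermitian_iff_isSymmetric).1 hA
  have h := (hA.eigenvectorBasis.sum_inner_mul_inner x (Matrix.toEuclideanLin A x)).symm
  rw [h]
  refine Finset.sum_congr rfl fun i _ => ?_
  have h1 : (inner ℝ (hA.eigenvectorBasis i) (Matrix.toEuclideanLin A x) : ℝ)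
      = inner ℝ (Matrix.toEuclideanLin A (hA.eigenvectorBasis i)) x := (hsym _ _).symm
  have h2 : Matrix.toEuclideanLin A (hA.eigenvectorBasis i)
      = hA.eigenvalues i • hA.eigenvectorBasis i := by
    apply (WithLp.equiv 2 (Fin m → ℝ)).injective
    ext j
    have := congrFun (hA.mulVec_eigenvectorBasis i) j
    simpa [Matrix.toEuclideanLin_apply] using this
  rw [h1, h2, real_inner_smul_left, real_inner_comm x]
  ring

lemma normsq_eq_sum (x : E) :
    ‖x‖^2 = ∑ i, (inner ℝ (hA.eigenvectorBasis i) x : ℝ)^2 := by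
  have h := (hA.eigenvectorBasis.sum_inner_mul_inner x x).symm
  rw [← real_inner_self_eq_norm_sq, h]
  refine Finset.sum_congr rfl fun i _ => ?_
  rw [real_inner_comm x]
  ring

lemma coeff_zero_of_mem_span (J : Finset (Fin m)) (x : E)
    (hx : x ∈ Submodule.span ℝ (hA.eigenvectorBasis '' (J : Set (Fin m))))
    (j : Fin m) (hj : j ∉ J) : (inner ℝ (hA.eigenvectorBasis j) x : ℝ) = 0 := by
  have : Submodule.span ℝ (hA.eigenvectorBasis '' (J : Set (Fin m)))
      ≤ LinearMap.ker ((innerSL ℝ (hA.eigenvectorBasis j)).toLinearMap) := by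
    rw [Submodule.span_le]
    rintro y ⟨i, hi, rfl⟩
    simp only [SetLike.mem_coe, LinearMap.mem_ker, ContinuousLinearMap.coe_coe, innerSL_apply_apply]
    exact hA.eigenvectorBasis.orthonormal.2 (fun h => hj (h ▸ hi))
  simpa using this hx

lemma finrank_span_basis (J : Finset (Fin m)) :
    Module.finrank ℝ (Submodule.span ℝ (hA.eigenvectorBasis '' (J : Set (Fin m)))) = J.card := by
  have hli : LinearIndependent ℝ (fun j : {j // j ∈ J} => hA.eigenvectorBasis j) :=
    (hA.eigenvectorBasis.orthonormal.comp _ Subtype.val_injective).linearIndependent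
  have hrange : Set.range (fun j : {j // j ∈ J} => hA.eigenvectorBasis j)
      = hA.eigenvectorBasis '' (J : Set (Fin m)) := by
    ext y
    simp
  rw [← hrange, finrank_span_eq_card hli, Fintype.card_coe]

lemma exists_supported (J : Finset (Fin m)) (S : Submodule ℝ E)
    (h : m < J.card + Module.finrank ℝ S) :
    ∃ x, x ∈ S ∧ x ≠ 0 ∧
      x ∈ Submodule.span ℝ (hA.eigenvectorBasis '' (J : Set (Fin m))) := by
  set T := Submodule.span ℝ (hA.eigenvectorBasis '' (J : Set (Fin m)))
  have hT : Module.finrank ℝ T = J.card := finrank_span_basis hA J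
  have hsup : Module.finrank ℝ ↥(S ⊔ T) ≤ m := by
    simpa using (Submodule.finrank_le (S ⊔ T))
  have hkey := Submodule.finrank_sup_add_finrank_inf_eq S T
  have hpos : 0 < Module.finrank ℝ ↥(S ⊓ T) := by omega
  rw [Module.finrank_pos_iff_exists_ne_zero] at hpos
  obtain ⟨⟨x, hx⟩, hx0⟩ := hpos
  exact ⟨x, hx.1, fun h => hx0 (by simpa using h), hx.2⟩

lemma quad_ge_of_supported (J : Finset (Fin m)) (x : E)
    (hx : ∀ j ∉ J, (inner ℝ (hA.eigenvectorBasis j) x : ℝ) = 0)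
    (c : ℝ) (hc : ∀ j ∈ J, c ≤ hA.eigenvalues j) :
    c * ‖x‖^2 ≤ inner ℝ x (Matrix.toEuclideanLin A x) := by
  rw [quad_eq_sum hA, normsq_eq_sum hA, Finset.mul_sum]
  refine Finset.sum_le_sum fun i _ => ?_
  by_cases hi : i ∈ J
  · exact mul_le_mul_of_nonneg_right (hc i hi) (sq_nonneg _)
  · rw [hx i hi]; simp

lemma quad_le_of_supported (J : Finset (Fin m)) (x : E)
    (hx : ∀ j ∉ J, (inner ℝ (hA.eigenvectorBasis j) x : ℝ) = 0)
    (c : ℝ) (hc : ∀ j ∈ J, hA.eigenvalues j ≤ c) :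
    (inner ℝ x (Matrix.toEuclideanLin A x) : ℝ) ≤ c * ‖x‖^2 := by
  rw [quad_eq_sum hA, normsq_eq_sum hA, Finset.mul_sum]
  refine Finset.sum_le_sum fun i _ => ?_
  by_cases hi : i ∈ J
  · exact mul_le_mul_of_nonneg_right (hc i hi) (sq_nonneg _)
  · rw [hx i hi]; simp

lemma sorted_le_eig {k j : Fin m} (hj : j ∈ Finset.image (Tuple.sort hA.eigenvalues) (Finset.Ici k)) :
    sortedEigs A hA k ≤ hA.eigenvalues j := by
  obtain ⟨i, hi, rfl⟩ := Finset.mem_image.1 hj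
  exact Tuple.monotone_sort hA.eigenvalues (Finset.mem_Ici.1 hi)

lemma eig_le_sorted {k j : Fin m} (hj : j ∈ Finset.image (Tuple.sort hA.eigenvalues) (Finset.Iic k)) :
    hA.eigenvalues j ≤ sortedEigs A hA k := by
  obtain ⟨i, hi, rfl⟩ := Finset.mem_image.1 hj
  exact Tuple.monotone_sort hA.eigenvalues (Finset.mem_Iic.1 hi)

lemma exists_rayleigh_ge (S : Submodule ℝ E) (k : Fin m)
    (hk : k.val + 1 ≤ Module.finrank ℝ S) :
    ∃ x, x ∈ S ∧ x ≠ 0 ∧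
      sortedEigs A hA k * ‖x‖^2 ≤ inner ℝ x (Matrix.toEuclideanLin A x) := by
  set J := Finset.image (Tuple.sort hA.eigenvalues) (Finset.Ici k) with hJ
  have hcard : J.card = m - k.val := by
    rw [hJ, Finset.card_image_of_injective _ (Tuple.sort hA.eigenvalues).injective,
      Fin.card_Ici]
  obtain ⟨x, hxS, hx0, hxT⟩ := exists_supported hA J S (by
    have := k.isLt; omega)
  refine ⟨x, hxS, hx0, quad_ge_of_supported hA J x
    (fun j hj => coeff_zero_of_mem_span hA J x hxT j hj) _ (fun j hj => sorted_le_eig hA hj)⟩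

lemma exists_rayleigh_le (S : Submodule ℝ E) (k : Fin m)
    (hk : m - k.val ≤ Module.finrank ℝ S) :
    ∃ x, x ∈ S ∧ x ≠ 0 ∧
      (inner ℝ x (Matrix.toEuclideanLin A x) : ℝ) ≤ sortedEigs A hA k * ‖x‖^2 := by
  set J := Finset.image (Tuple.sort hA.eigenvalues) (Finset.Iic k) with hJ
  have hcard : J.card = k.val + 1 := by
    rw [hJ, Finset.card_image_of_injective _ (Tuple.sort hA.eigenvalues).injective,
      Fin.card_Iic]
  obtain ⟨x, hxS, hx0, hxT⟩ := exists_supported hA J S (by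
    have := k.isLt; omega)
  refine ⟨x, hxS, hx0, quad_le_of_supported hA J x
    (fun j hj => coeff_zero_of_mem_span hA J x hxT j hj) _ (fun j hj => eig_le_sorted hA hj)⟩

theorem eig_mono {B : Matrix (Fin m) (Fin m) ℝ} (hB : B.IsHermitian)
    (hq : ∀ x : E, (inner ℝ x (Matrix.toEuclideanLin B x) : ℝ) ≤ inner ℝ x (Matrix.toEuclideanLin A x))
    (k : Fin m) : sortedEigs B hB k ≤ sortedEigs A hA k := by
  set J := Finset.image (Tuple.sort hB.eigenvalues) (Finset.Ici k) with hJ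
  set S := Submodule.span ℝ (hB.eigenvectorBasis '' (J : Set (Fin m))) with hS
  have hcard : J.card = m - k.val := by
    rw [hJ, Finset.card_image_of_injective _ (Tuple.sort hB.eigenvalues).injective,
      Fin.card_Ici]
  have hfr : Module.finrank ℝ S = m - k.val := by rw [hS, finrank_span_basis hB J, hcard]
  obtain ⟨x, hxS, hx0, hxA⟩ := exists_rayleigh_le hA S k (le_of_eq hfr.symm)
  have hxB : sortedEigs B hB k * ‖x‖^2 ≤ inner ℝ x (Matrix.toEuclideanLin B x) :=
    quad_ge_of_supported hB J x (fun j hj => coeff_zero_of_mem_span hB J x hxS j hj) _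
      (fun j hj => sorted_le_eig hB hj)
  have hn : (0:ℝ) < ‖x‖^2 := by have := norm_pos_iff.2 hx0; positivity
  have := hxB.trans ((hq x).trans hxA)
  exact le_of_mul_le_mul_right (by linarith) hn

theorem eig_interlace_up {B : Matrix (Fin m) (Fin m) ℝ} (hB : B.IsHermitian) (v : E)
    (he : ∀ x : E, (inner ℝ v x : ℝ) = 0 →
      (inner ℝ x (Matrix.toEuclideanLin A x) : ℝ) = inner ℝ x (Matrix.toEuclideanLin B x))
    (k l : Fin m) (hl : l.val = k.val + 1) :
    sortedEigs A hA k ≤ sortedEigs B hB l := by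
  set J := Finset.image (Tuple.sort hB.eigenvalues) (Finset.Iic l) with hJ
  set T := Submodule.span ℝ (hB.eigenvectorBasis '' (J : Set (Fin m))) with hT
  set f : E →ₗ[ℝ] ℝ := (innerSL ℝ v).toLinearMap with hf
  set S := T ⊓ LinearMap.ker f with hS
  have hcard : J.card = l.val + 1 := by
    rw [hJ, Finset.card_image_of_injective _ (Tuple.sort hB.eigenvalues).injective,
      Fin.card_Iic]
  have hfrT : Module.finrank ℝ T = l.val + 1 := by rw [hT, finrank_span_basis hB J, hcard]
  have hfrK : m - 1 ≤ Module.finrank ℝ (LinearMap.ker f) := by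
    have h1 := LinearMap.finrank_range_add_finrank_ker f
    have h2 : Module.finrank ℝ (LinearMap.range f) ≤ 1 := by
      simpa using (Submodule.finrank_le (LinearMap.range f))
    rw [finrank_euclideanSpace, Fintype.card_fin] at h1
    omega
  have hfrS : k.val + 1 ≤ Module.finrank ℝ S := by
    have hkey := Submodule.finrank_sup_add_finrank_inf_eq T (LinearMap.ker f)
    have hsup : Module.finrank ℝ ↥(T ⊔ LinearMap.ker f) ≤ m := by
      simpa using (Submodule.finrank_le (T ⊔ LinearMap.ker f))
    have := k.isLt
    rw [hS]
    omega
  obtain ⟨x, hxS, hx0, hxA⟩ := exists_rayleigh_ge hA S k hfrS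
  have hxT : x ∈ T := hxS.1
  have hxv : (inner ℝ v x : ℝ) = 0 := hxS.2
  have hxB : (inner ℝ x (Matrix.toEuclideanLin B x) : ℝ) ≤ sortedEigs B hB l * ‖x‖^2 :=
    quad_le_of_supported hB J x (fun j hj => coeff_zero_of_mem_span hB J x hxT j hj) _
      (fun j hj => eig_le_sorted hB hj)
  have hn : (0:ℝ) < ‖x‖^2 := by have := norm_pos_iff.2 hx0; positivity
  have := hxA.trans (((he x hxv).le).trans hxB)
  exact le_of_mul_le_mul_right (by linarith) hn

noncomputable def quadφ {M : ℕ} (x : Fin M → ℝ) : Matrix (Fin M) (Fin M) ℝ →ₗ[ℝ] ℝ where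
  toFun := fun A => x ⬝ᵥ A *ᵥ x
  map_add' := by
    intro A B
    show x ⬝ᵥ (A + B) *ᵥ x = x ⬝ᵥ A *ᵥ x + x ⬝ᵥ B *ᵥ x
    rw [Matrix.add_mulVec, dotProduct_add]
  map_smul' := by
    intro c A
    show x ⬝ᵥ (c • A) *ᵥ x = c • (x ⬝ᵥ A *ᵥ x)
    rw [Matrix.smul_mulVec, dotProduct_smul]

lemma wvec_dot {M : ℕ} (i j : Fin M) (x : Fin M → ℝ) : wvec i j ⬝ᵥ x = x i - x j := by
  simp [wvec, sub_dotProduct, single_dotProduct]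

lemma lap_quad {M : ℕ} (β : Fin M → Fin M → ℝ) (x : Fin M → ℝ) :
    x ⬝ᵥ (Lap β) *ᵥ x = ∑ i, ∑ j, if i < j then β i j * (x i - x j)^2 else 0 := by
  have h0 : x ⬝ᵥ (Lap β) *ᵥ x = quadφ x (Lap β) := rfl
  rw [h0, Lap, map_sum]
  refine Finset.sum_congr rfl fun i _ => ?_
  rw [map_sum]
  refine Finset.sum_congr rfl fun j _ => ?_
  by_cases h : i < j
  · have hv : Matrix.vecMulVec (wvec i j) (wvec i j) *ᵥ x = (wvec i j ⬝ᵥ x) • wvec i j := by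
      funext a
      simp only [Matrix.mulVec, Matrix.vecMulVec_apply, dotProduct, Pi.smul_apply,
        smul_eq_mul]
      rw [Finset.sum_mul]
      refine Finset.sum_congr rfl fun b _ => ?_
      ring
    rw [if_pos h, if_pos h, _root_.map_smul, smul_eq_mul]
    have hq : quadφ x (Matrix.vecMulVec (wvec i j) (wvec i j)) = (x i - x j)^2 := by
      show x ⬝ᵥ Matrix.vecMulVec (wvec i j) (wvec i j) *ᵥ x = _
      rw [hv, dotProduct_smul, wvec_dot, dotProduct_comm, wvec_dot, smul_eq_mul]
      ring
    rw [hq]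
  · rw [if_neg h, if_neg h, map_zero]

lemma lagrange {N : ℕ} (a y : Fin N → ℝ) :
    (∑ i, ∑ j, if i < j then a i * a j * (y i - y j)^2 else 0)
      = (∑ i, a i) * (∑ i, a i * y i^2) - (∑ i, a i * y i)^2 := by
  have dec : ∀ i j : Fin N, a i * a j * (y i - y j)^2
      = (if i < j then a i * a j * (y i - y j)^2 else 0)
        + (if j < i then a i * a j * (y i - y j)^2 else 0) := by
    intro i j
    rcases lt_trichotomy i j with h|h|h
    · rw [if_pos h, if_neg (not_lt.2 h.le), add_zero]
    · subst h; simp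
    · rw [if_neg (not_lt.2 h.le), if_pos h, zero_add]
  have hsymm : (∑ i, ∑ j, if j < i then a i * a j * (y i - y j)^2 else 0)
      = ∑ i, ∑ j, if i < j then a i * a j * (y i - y j)^2 else 0 := by
    rw [Finset.sum_comm]
    refine Finset.sum_congr rfl fun i _ => Finset.sum_congr rfl fun j _ => ?_
    by_cases h : i < j
    · rw [if_pos h, if_pos h]; ring
    · rw [if_neg h, if_neg h]
  have key : (∑ i, ∑ j, if i < j then a i * a j * (y i - y j)^2 else 0) * 2
      = ∑ i, ∑ j, a i * a j * (y i - y j)^2 := by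
    calc (∑ i, ∑ j, if i < j then a i * a j * (y i - y j)^2 else 0) * 2
        = (∑ i, ∑ j, if i < j then a i * a j * (y i - y j)^2 else 0)
          + (∑ i, ∑ j, if j < i then a i * a j * (y i - y j)^2 else 0) := by
          rw [hsymm]; ring
      _ = ∑ i, ∑ j, a i * a j * (y i - y j)^2 := by
          rw [← Finset.sum_add_distrib]
          refine Finset.sum_congr rfl fun i _ => ?_
          rw [← Finset.sum_add_distrib]
          exact (Finset.sum_congr rfl fun j _ => (dec i j).symm)
  have hfull : (∑ i, ∑ j, a i * a j * (y i - y j)^2)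
      = 2 * ((∑ i, a i) * (∑ i, a i * y i^2)) - 2 * (∑ i, a i * y i)^2 := by
    have e1 : ∀ i : Fin N, ∑ j, a i * a j * (y i - y j)^2
        = (a i * y i ^ 2) * (∑ j, a j) + a i * (∑ j, a j * y j^2)
          + (a i * y i) * ((-2) * (∑ j, a j * y j)) := by
      intro i
      rw [Finset.mul_sum, Finset.mul_sum, Finset.mul_sum, Finset.mul_sum,
        ← Finset.sum_add_distrib, ← Finset.sum_add_distrib]
      exact Finset.sum_congr rfl fun j _ => by ring
    rw [Finset.sum_congr rfl (fun i _ => e1 i), Finset.sum_add_distrib,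
      Finset.sum_add_distrib, ← Finset.sum_mul, ← Finset.sum_mul, ← Finset.sum_mul]
    ring
  linarith

lemma quad_diff {n : ℕ} (α α' : Fin (n+1) → Fin (n+1) → ℝ)
    (hs : (0:ℝ) < ∑ i : Fin n, α i.castSucc (Fin.last n))
    (hmod : ∀ i j : Fin n, i < j → α' i.castSucc j.castSucc
      = α i.castSucc j.castSucc +
        α i.castSucc (Fin.last n) * α j.castSucc (Fin.last n) /
          ∑ k : Fin n, α k.castSucc (Fin.last n))
    (hzero : ∀ i : Fin n, α' i.castSucc (Fin.last n) = 0)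
    (x : Fin (n+1) → ℝ) :
    x ⬝ᵥ (Lap α) *ᵥ x = x ⬝ᵥ (Lap α') *ᵥ x +
      (∑ i : Fin n, α i.castSucc (Fin.last n) * (x i.castSucc - x (Fin.last n)))^2
        / (∑ i : Fin n, α i.castSucc (Fin.last n)) := by
  set a : Fin n → ℝ := fun i => α i.castSucc (Fin.last n) with ha
  set s : ℝ := ∑ i : Fin n, a i with hsdef
  set y : Fin n → ℝ := fun i => x i.castSucc - x (Fin.last n) with hy
  have hsne : s ≠ 0 := ne_of_gt hs
  have hxy : ∀ i j : Fin n, x i.castSucc - x j.castSucc = y i - y j := by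
    intro i j; simp only [hy]; ring
  -- Qα
  have eA : x ⬝ᵥ (Lap α) *ᵥ x
      = (∑ i : Fin n, ∑ j : Fin n,
          if i < j then α i.castSucc j.castSucc * (y i - y j)^2 else 0)
        + ∑ i : Fin n, a i * y i ^ 2 := by
    rw [lap_quad, Fin.sum_univ_castSucc]
    have hlast : (∑ j : Fin (n+1), if Fin.last n < j
        then α (Fin.last n) j * (x (Fin.last n) - x j)^2 else 0) = 0 :=
      Finset.sum_eq_zero fun j _ => if_neg (not_lt.2 (Fin.le_last j))
    rw [hlast, add_zero, ← Finset.sum_add_distrib]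
    refine Finset.sum_congr rfl fun i _ => ?_
    rw [Fin.sum_univ_castSucc, if_pos (Fin.castSucc_lt_last i)]
    congr 1
    refine Finset.sum_congr rfl fun j _ => ?_
    simp only [Fin.castSucc_lt_castSucc_iff]
    by_cases h : i < j
    · rw [if_pos h, if_pos h, hxy]
    · rw [if_neg h, if_neg h]
  -- Qα'
  have eB : x ⬝ᵥ (Lap α') *ᵥ x
      = (∑ i : Fin n, ∑ j : Fin n,
          if i < j then α i.castSucc j.castSucc * (y i - y j)^2 else 0)
        + s⁻¹ * ∑ i : Fin n, ∑ j : Fin n,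
            if i < j then a i * a j * (y i - y j)^2 else 0 := by
    rw [lap_quad, Fin.sum_univ_castSucc]
    have hlast : (∑ j : Fin (n+1), if Fin.last n < j
        then α' (Fin.last n) j * (x (Fin.last n) - x j)^2 else 0) = 0 :=
      Finset.sum_eq_zero fun j _ => if_neg (not_lt.2 (Fin.le_last j))
    rw [hlast, add_zero, Finset.mul_sum, ← Finset.sum_add_distrib]
    refine Finset.sum_congr rfl fun i _ => ?_
    rw [Fin.sum_univ_castSucc, if_pos (Fin.castSucc_lt_last i), hzero i, zero_mul, add_zero,
      Finset.mul_sum, ← Finset.sum_add_distrib]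
    refine Finset.sum_congr rfl fun j _ => ?_
    simp only [Fin.castSucc_lt_castSucc_iff]
    by_cases h : i < j
    · rw [if_pos h, if_pos h, if_pos h, hmod i j h, hxy]
      field_simp
      ring
    · rw [if_neg h, if_neg h, if_neg h, mul_zero, add_zero]
  rw [eA, eB, lagrange]
  field_simp
  ring


lemma inner_toEuclideanLin {M₀ : ℕ} (C : Matrix (Fin M₀) (Fin M₀) ℝ)
    (x : EuclideanSpace ℝ (Fin M₀)) :
    (inner ℝ x (Matrix.toEuclideanLin C x) : ℝ)
      = (WithLp.equiv 2 (Fin M₀ → ℝ) x) ⬝ᵥ C *ᵥ (WithLp.equiv 2 (Fin M₀ → ℝ) x) := by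
  simp [PiLp.inner_apply, RCLike.inner_apply, dotProduct, Matrix.toEuclideanLin_apply, mul_comm]

lemma inner_dot {M₀ : ℕ} (v x : EuclideanSpace ℝ (Fin M₀)) :
    (inner ℝ v x : ℝ) = (WithLp.equiv 2 (Fin M₀ → ℝ) v) ⬝ᵥ (WithLp.equiv 2 (Fin M₀ → ℝ) x) := by
  simp [PiLp.inner_apply, RCLike.inner_apply, dotProduct, mul_comm]

theorem stmt1 (n : ℕ) (hn : 1 ≤ n) (α : Fin (n+1) → Fin (n+1) → ℝ)
    (hα : ∀ i j : Fin (n+1), i < j → 0 ≤ α i j)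
    (hs : 0 < ∑ i : Fin n, α i.castSucc (Fin.last n))
    (α' : Fin (n+1) → Fin (n+1) → ℝ)
    (hα' : ∀ i j : Fin n, i < j → α' i.castSucc j.castSucc
      = α i.castSucc j.castSucc +
        α i.castSucc (Fin.last n) * α j.castSucc (Fin.last n) /
          ∑ k : Fin n, α k.castSucc (Fin.last n))
    (hα'0 : ∀ i : Fin n, α' i.castSucc (Fin.last n) = 0)
    (hA : (Lap α).IsHermitian) (hB : (Lap α').IsHermitian) :
    ∀ k : Fin n,
      sortedEigs (Lap α') hB k.castSucc ≤ sortedEigs (Lap α) hA k.castSucc ∧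
      sortedEigs (Lap α) hA k.castSucc ≤ sortedEigs (Lap α') hB k.succ := by
  set a : Fin n → ℝ := fun i => α i.castSucc (Fin.last n) with ha
  set s : ℝ := ∑ i : Fin n, a i with hsdef
  set vv : Fin (n+1) → ℝ := Fin.snoc a (-s) with hvv
  set v : EuclideanSpace ℝ (Fin (n+1)) := (WithLp.equiv 2 (Fin (n+1) → ℝ)).symm vv with hv
  have hdot : ∀ x : Fin (n+1) → ℝ,
      vv ⬝ᵥ x = ∑ i : Fin n, a i * (x i.castSucc - x (Fin.last n)) := by
    intro x
    rw [dotProduct, Fin.sum_univ_castSucc]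
    simp only [hvv, Fin.snoc_castSucc, Fin.snoc_last]
    rw [Finset.sum_congr rfl (fun (i : Fin n) _ =>
      (by ring : a i * (x i.castSucc - x (Fin.last n))
        = a i * x i.castSucc + (-(a i * x (Fin.last n))))), Finset.sum_add_distrib]
    have h2 : -s * x (Fin.last n) = ∑ i : Fin n, -(a i * x (Fin.last n)) := by
      rw [hsdef, neg_mul, Finset.sum_mul, ← Finset.sum_neg_distrib]
    rw [h2]
  have hq : ∀ x : EuclideanSpace ℝ (Fin (n+1)),
      (inner ℝ x (Matrix.toEuclideanLin (Lap α') x) : ℝ)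
        ≤ inner ℝ x (Matrix.toEuclideanLin (Lap α) x) := by
    intro x
    rw [inner_toEuclideanLin, inner_toEuclideanLin,
      quad_diff α α' hs hα' hα'0 (WithLp.equiv 2 (Fin (n+1) → ℝ) x)]
    have : (0:ℝ) ≤ (∑ i : Fin n, a i * ((WithLp.equiv 2 (Fin (n+1) → ℝ) x) i.castSucc
        - (WithLp.equiv 2 (Fin (n+1) → ℝ) x) (Fin.last n)))^2 / s :=
      div_nonneg (sq_nonneg _) hs.le
    linarith
  have he : ∀ x : EuclideanSpace ℝ (Fin (n+1)), (inner ℝ v x : ℝ) = 0 →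
      (inner ℝ x (Matrix.toEuclideanLin (Lap α) x) : ℝ)
        = inner ℝ x (Matrix.toEuclideanLin (Lap α') x) := by
    intro x hvx
    rw [inner_dot] at hvx
    have hvx' : vv ⬝ᵥ (WithLp.equiv 2 (Fin (n+1) → ℝ) x) = 0 := by
      simpa [hv] using hvx
    rw [hdot] at hvx'
    rw [inner_toEuclideanLin, inner_toEuclideanLin,
      quad_diff α α' hs hα' hα'0 (WithLp.equiv 2 (Fin (n+1) → ℝ) x), hvx']
    simp
  intro k
  refine ⟨eig_mono hA hB hq k.castSucc, ?_⟩
  exact eig_interlace_up hA hB v he k.castSucc k.succ (by simp)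

end Aux
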